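/- Suppose each f_ij is continuously differentiable with ∇f_ij Lipschitz of constant l_ij. For each i ∈ {1,…,N}, let C̄_i = C_i − (1/n_i)1_{n_i}1_{n_i}ᵀ and Ī_i = I_{n_i} − (1/n_i)1_{n_i}1_{n_i}ᵀ for some C_i ∈ ℝ^{n_i×n_i}, and let W_{c_i} be symmetric positive definite with C̄_iᵀ W_{c_i} C̄_i − W_{c_i} = −I_{n_i}. Let Q_i(ξ_i) ∈ ℝ^{n_i²} stack the block-partial gradients (∂f_ij/∂x_i)(ξ_ij) over j = 1,…,n_i, where ξ_i stacks ξ_ij ∈ ℝ^{n_sum}, and let ξ ∈ ℝ^{n_sum²} stack all ξ_ij. Let M ∈ ℝ^{n_sum²×n_sum²}. Suppose sequences ξ(k), e_ξ(k) ∈ ℝ^{n_sum²} and e_{ψ_i}(k) ∈ ℝ^{n_i²} satisfy, for all k: e_{ψ_i}(k+1) = (C̄_i ⊗ I_{n_i}) e_{ψ_i}(k) + (Ī_i ⊗ I_{n_i})(Q_i(ξ_i(k+1)) − Q_i(ξ_i(k))) and ξ(k+1) − ξ(k) = (M − I) e_ξ(k). Let V_ψ(k) = Σ_{i=1}^N e_{ψ_i}(k)ᵀ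 (W_{c_i} ⊗ I_{n_i}) e_{ψ_i}(k) and let e_ψ(k) stack the e_{ψ_i}(k). Then for every k: V_ψ(k+1) − V_ψ(k) ≤ −(1/2)‖e_ψ(k)‖² + 2 max_{i, j} ((2‖C̄_iᵀ W_{c_i} Ī_i‖² + ‖Ī_iᵀ W_{c_i} Ī_i‖) l_ij²) · ‖I − M‖² ‖e_ξ(k)‖². -/

import Mathlib

noncomputable section
open Matrix Kronecker

/-- The collective decision space: coalition `i` has block `ℝ^{n i}`. -/
abbrev Vec (N : ℕ) (n : Fin N → ℕ) := PiLp 2 (fun i : Fin N => EuclideanSpace ℝ (Fin (n i)))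

/-- Agents, indexed by coalition and position within the coalition. -/
abbrev Agent (N : ℕ) (n : Fin N → ℕ) := Σ i : Fin N, Fin (n i)

/-- The stacked estimation vector `ξ ∈ ℝ^{n_sum²}`. -/
abbrev Est (N : ℕ) (n : Fin N → ℕ) := EuclideanSpace ℝ (Agent N n × Agent N n)

/-- The stacked tracking errors `e_ψ = (e_{ψ_1},…,e_{ψ_N})`, with the Euclidean norm. -/
abbrev PsiStack (N : ℕ) (n : Fin N → ℕ) :=
  PiLp 2 (fun i : Fin N => EuclideanSpace ℝ (Fin (n i) × Fin (n i)))

variable {N : ℕ} {n : Fin N → ℕ}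

/-- Agent `a`'s estimate of the collective decision, as an element of the decision space. -/
def toVec (ξ : Est N n) (a : Agent N n) : Vec N n :=
  WithLp.toLp 2 (fun p => WithLp.toLp 2 (fun q => ξ (a, ⟨p, q⟩)))

/-- `Q_i(ξ_i) ∈ ℝ^{n_i²}`: entry `(j, m)` is coordinate `m` (within block `i`) of the
gradient of `f_ij` at agent `ij`'s estimate. -/
def Qfull (f : ∀ i : Fin N, Fin (n i) → Vec N n → ℝ) (i : Fin N) (ξ : Est N n) :
    Fin (n i) × Fin (n i) → ℝ :=
  fun jm => gradient (f i jm.1) (toVec ξ ⟨i, jm.1⟩) i jm.2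

/-- `(1/n)·1 1ᵀ`. -/
def avgMat (m : ℕ) : Matrix (Fin m) (Fin m) ℝ := Matrix.of fun _ _ => 1 / (m : ℝ)

/-- The spectral (L² operator) norm of a real matrix. -/
def specNorm {m p : Type*} [Fintype m] [Fintype p] [DecidableEq p] (A : Matrix m p ℝ) : ℝ :=
  ‖LinearMap.toContinuousLinearMap (Matrix.toEuclideanLin A)‖

/-- Maximum of a real-valued function over a nonempty finite type. -/
def fmax {ι : Type*} [Fintype ι] (h : Nonempty ι) (g : ι → ℝ) : ℝ :=
  Finset.univ.sup' (Finset.univ_nonempty_iff.mpr h) g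

section helpers
set_option linter.unusedSectionVars false
variable {ι κ μ : Type*} [Fintype ι] [Fintype κ] [Fintype μ] [DecidableEq ι] [DecidableEq κ]
  [DecidableEq μ]

/-- View a plain function as an element of Euclidean space. -/
def toE {ι : Type*} (x : ι → ℝ) : EuclideanSpace ℝ ι := WithLp.toLp 2 x

@[simp] lemma toE_apply (x : ι → ℝ) (i : ι) : toE x i = x i := rfl

lemma toE_eu (x : EuclideanSpace ℝ ι) : toE x = x := rfl

lemma hdot_inner (x y : EuclideanSpace ℝ ι) : x ⬝ᵥ y = inner x y (𝕜 := ℝ) := by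
  simp [PiLp.inner_apply, dotProduct, RCLike.inner_apply, mul_comm]

lemma dot_self_eq (x : ι → ℝ) : x ⬝ᵥ x = ‖toE x‖ ^ 2 := by
  rw [show x ⬝ᵥ x = toE x ⬝ᵥ toE x from rfl, hdot_inner]
  exact real_inner_self_eq_norm_sq (toE x)

lemma dot_le (x y : ι → ℝ) : x ⬝ᵥ y ≤ ‖toE x‖ * ‖toE y‖ := by
  rw [show x ⬝ᵥ y = toE x ⬝ᵥ toE y from rfl, hdot_inner]
  exact real_inner_le_norm (toE x) (toE y)

lemma eu_norm_sq (x : ι → ℝ) : ‖toE x‖ ^ 2 = ∑ i, x i ^ 2 := by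
  rw [PiLp.norm_sq_eq_of_L2]; simp [Real.norm_eq_abs, sq_abs, toE]

lemma specNorm_nonneg (A : Matrix ι κ ℝ) : 0 ≤ specNorm A := norm_nonneg _

lemma norm_mulVec_le (A : Matrix ι κ ℝ) (x : κ → ℝ) :
    ‖toE (A.mulVec x)‖ ≤ specNorm A * ‖toE x‖ :=
  (LinearMap.toContinuousLinearMap (Matrix.toEuclideanLin A)).le_opNorm (toE x)

lemma norm_mulVec_sq_le (A : Matrix ι κ ℝ) (x : κ → ℝ) :
    ‖toE (A.mulVec x)‖ ^ 2 ≤ specNorm A ^ 2 * ‖toE x‖ ^ 2 := by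
  have := pow_le_pow_left₀ (norm_nonneg _) (norm_mulVec_le A x) 2
  rwa [mul_pow] at this

lemma specNorm_neg (A : Matrix ι κ ℝ) : specNorm (-A) = specNorm A := by
  unfold specNorm; rw [map_neg, map_neg, norm_neg]

lemma sub_kron (A B : Matrix ι ι ℝ) (C : Matrix μ μ ℝ) :
    (A - B) ⊗ₖ C = A ⊗ₖ C - B ⊗ₖ C := by
  ext ⟨a, b⟩ ⟨c, d⟩
  simp [Matrix.kroneckerMap_apply, sub_mul]

lemma kron_one_transpose (A : Matrix ι ι ℝ) :
    (A ⊗ₖ (1 : Matrix μ μ ℝ))ᵀ = Aᵀ ⊗ₖ (1 : Matrix μ μ ℝ) := by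
  rw [← Matrix.kroneckerMap_transpose, Matrix.transpose_one]

lemma kron_one_mul (A B : Matrix ι ι ℝ) :
    (A ⊗ₖ (1 : Matrix μ μ ℝ)) * (B ⊗ₖ (1 : Matrix μ μ ℝ)) = (A * B) ⊗ₖ (1 : Matrix μ μ ℝ) := by
  rw [← Matrix.mul_kronecker_mul, one_mul]

lemma kron_mulVec_apply (G : Matrix κ κ ℝ) (x : κ × μ → ℝ) (j : κ) (m : μ) :
    ((G ⊗ₖ (1 : Matrix μ μ ℝ)).mulVec x) (j, m) = G.mulVec (fun j' => x (j', m)) j := by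
  simp [Matrix.mulVec, dotProduct, Fintype.sum_prod_type, Matrix.kroneckerMap_apply,
    Matrix.one_apply, mul_ite, ite_mul, mul_assoc]

lemma norm_kron_mulVec_sq_le (G : Matrix κ κ ℝ) (x : κ × μ → ℝ) :
    ‖toE ((G ⊗ₖ (1 : Matrix μ μ ℝ)).mulVec x)‖ ^ 2 ≤ specNorm G ^ 2 * ‖toE x‖ ^ 2 := by
  rw [eu_norm_sq, eu_norm_sq]
  calc ∑ p : κ × μ, ((G ⊗ₖ (1 : Matrix μ μ ℝ)).mulVec x p) ^ 2
      = ∑ m : μ, ∑ j : κ, (G.mulVec (fun j' => x (j', m)) j) ^ 2 := by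
        rw [Fintype.sum_prod_type, Finset.sum_comm]
        simp_rw [kron_mulVec_apply]
    _ ≤ ∑ m : μ, specNorm G ^ 2 * ∑ j, (x (j, m)) ^ 2 := by
        apply Finset.sum_le_sum; intro m _
        have h3 := norm_mulVec_sq_le G (fun j' => x (j', m))
        rw [eu_norm_sq, eu_norm_sq] at h3
        exact h3
    _ = specNorm G ^ 2 * ∑ p : κ × μ, (x p) ^ 2 := by
        rw [← Finset.mul_sum, Fintype.sum_prod_type, Finset.sum_comm]

lemma norm_kron_mulVec_le (G : Matrix κ κ ℝ) (x : κ × μ → ℝ) :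
    ‖toE ((G ⊗ₖ (1 : Matrix μ μ ℝ)).mulVec x)‖ ≤ specNorm G * ‖toE x‖ := by
  have h := norm_kron_mulVec_sq_le G x
  nlinarith [norm_nonneg (toE ((G ⊗ₖ (1 : Matrix μ μ ℝ)).mulVec x)), norm_nonneg (toE x),
    specNorm_nonneg G, mul_nonneg (specNorm_nonneg G) (norm_nonneg (toE x))]

lemma dmv (P : Matrix ι ι ℝ) (x y : ι → ℝ) :
    x ⬝ᵥ (Pᵀ.mulVec y) = (P.mulVec x) ⬝ᵥ y := by
  rw [Matrix.dotProduct_mulVec, Matrix.vecMul_transpose]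

lemma quad_expand (A B W : Matrix ι ι ℝ) (hW : Wᵀ = W) (u v : ι → ℝ) :
    (A.mulVec u + B.mulVec v) ⬝ᵥ (W.mulVec (A.mulVec u + B.mulVec v))
    = u ⬝ᵥ ((Aᵀ * W * A).mulVec u) + 2 * (u ⬝ᵥ ((Aᵀ * W * B).mulVec v))
      + v ⬝ᵥ ((Bᵀ * W * B).mulVec v) := by
  have h1 : ∀ (P : Matrix ι ι ℝ) (a b : ι → ℝ), (P.mulVec a) ⬝ᵥ b = a ⬝ᵥ (Pᵀ.mulVec b) :=
    fun P a b => (dmv P a b).symm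
  have hBA : (B.mulVec v) ⬝ᵥ (W.mulVec (A.mulVec u)) = u ⬝ᵥ ((Aᵀ * W * B).mulVec v) := by
    rw [h1, Matrix.mulVec_mulVec, Matrix.mulVec_mulVec, dotProduct_comm,
      Matrix.dotProduct_mulVec, ← Matrix.mulVec_transpose]
    congr 1
    rw [Matrix.transpose_mul, Matrix.transpose_mul, Matrix.transpose_transpose, hW, mul_assoc]
  have hAA : (A.mulVec u) ⬝ᵥ (W.mulVec (A.mulVec u)) = u ⬝ᵥ ((Aᵀ * W * A).mulVec u) := by
    rw [h1, Matrix.mulVec_mulVec, Matrix.mulVec_mulVec, mul_assoc]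
  have hAB : (A.mulVec u) ⬝ᵥ (W.mulVec (B.mulVec v)) = u ⬝ᵥ ((Aᵀ * W * B).mulVec v) := by
    rw [h1, Matrix.mulVec_mulVec, Matrix.mulVec_mulVec, mul_assoc]
  have hBB : (B.mulVec v) ⬝ᵥ (W.mulVec (B.mulVec v)) = v ⬝ᵥ ((Bᵀ * W * B).mulVec v) := by
    rw [h1, Matrix.mulVec_mulVec, Matrix.mulVec_mulVec, mul_assoc]
  rw [Matrix.mulVec_add, dotProduct_add, add_dotProduct, add_dotProduct,
    hAA, hAB, hBA, hBB]
  ring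

end helpers

/-- Lemma 5 of the paper: decrease of the gradient-tracking Lyapunov
function `V_ψ(k) = Σ_i e_{ψ_i}(k)ᵀ (W_{c_i} ⊗ I) e_{ψ_i}(k)`. -/
theorem statement7 (hN : 0 < N) (hn : ∀ i, 0 < n i)
    (f : ∀ i : Fin N, Fin (n i) → Vec N n → ℝ)
    (l : ∀ i : Fin N, Fin (n i) → ℝ)
    (hdiff : ∀ i j, ContDiff ℝ 1 (f i j))
    (hlip : ∀ i j (a b : Vec N n),
      ‖gradient (f i j) a - gradient (f i j) b‖ ≤ l i j * ‖a - b‖)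
    (C Wc : ∀ i : Fin N, Matrix (Fin (n i)) (Fin (n i)) ℝ)
    (hWc : ∀ i, (Wc i).PosDef)
    (hLyap : ∀ i, (C i - avgMat (n i))ᵀ * Wc i * (C i - avgMat (n i)) - Wc i = -1)
    (M : Matrix (Agent N n × Agent N n) (Agent N n × Agent N n) ℝ)
    (ξ eξ : ℕ → Est N n)
    (eψ : ℕ → PsiStack N n)
    (heψ : ∀ k i, eψ (k + 1) i =
      ((C i - avgMat (n i)) ⊗ₖ (1 : Matrix (Fin (n i)) (Fin (n i)) ℝ)).mulVec (eψ k i)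
      + (((1 : Matrix (Fin (n i)) (Fin (n i)) ℝ) - avgMat (n i))
            ⊗ₖ (1 : Matrix (Fin (n i)) (Fin (n i)) ℝ)).mulVec
          (Qfull f i (ξ (k + 1)) - Qfull f i (ξ k)))
    (hξ : ∀ k, ξ (k + 1) - ξ k = (M - 1).mulVec (eξ k))
    (k : ℕ) :
    (∑ i, eψ (k + 1) i ⬝ᵥ
        ((Wc i ⊗ₖ (1 : Matrix (Fin (n i)) (Fin (n i)) ℝ)).mulVec (eψ (k + 1) i)))
      - (∑ i, eψ k i ⬝ᵥ
        ((Wc i ⊗ₖ (1 : Matrix (Fin (n i)) (Fin (n i)) ℝ)).mulVec (eψ k i)))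
    ≤ -(1 / 2) * ‖eψ k‖ ^ 2
      + 2 * fmax (⟨⟨⟨0, hN⟩, ⟨0, hn ⟨0, hN⟩⟩⟩⟩ : Nonempty (Agent N n))
          (fun a =>
            (2 * specNorm ((C a.1 - avgMat (n a.1))ᵀ * Wc a.1
                  * ((1 : Matrix (Fin (n a.1)) (Fin (n a.1)) ℝ) - avgMat (n a.1))) ^ 2
              + specNorm (((1 : Matrix (Fin (n a.1)) (Fin (n a.1)) ℝ) - avgMat (n a.1))ᵀ
                  * Wc a.1
                  * ((1 : Matrix (Fin (n a.1)) (Fin (n a.1)) ℝ) - avgMat (n a.1))))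
              * l a.1 a.2 ^ 2)
          * specNorm ((1 : Matrix (Agent N n × Agent N n) (Agent N n × Agent N n) ℝ) - M) ^ 2
          * ‖eξ k‖ ^ 2 := by
  classical
  -- abbreviations
  set Ab : ∀ i : Fin N, Matrix (Fin (n i)) (Fin (n i)) ℝ := fun i => C i - avgMat (n i) with hAb
  set Ib : ∀ i : Fin N, Matrix (Fin (n i)) (Fin (n i)) ℝ :=
    fun i => (1 : Matrix (Fin (n i)) (Fin (n i)) ℝ) - avgMat (n i) with hIb
  set cc : Fin N → ℝ := fun i =>
    2 * specNorm ((Ab i)ᵀ * Wc i * Ib i) ^ 2 + specNorm ((Ib i)ᵀ * Wc i * Ib i) with hcc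
  set Qd : ∀ i : Fin N, Fin (n i) × Fin (n i) → ℝ :=
    fun i => Qfull f i (ξ (k + 1)) - Qfull f i (ξ k) with hQd
  set D : Est N n := ξ (k + 1) - ξ k with hD
  have hccnn : ∀ i, 0 ≤ cc i := fun i =>
    add_nonneg (mul_nonneg (by norm_num) (sq_nonneg _)) (specNorm_nonneg _)
  -- per-coalition bound
  have key : ∀ i : Fin N,
      eψ (k + 1) i ⬝ᵥ ((Wc i ⊗ₖ (1 : Matrix (Fin (n i)) (Fin (n i)) ℝ)).mulVec (eψ (k + 1) i))
        - eψ k i ⬝ᵥ ((Wc i ⊗ₖ (1 : Matrix (Fin (n i)) (Fin (n i)) ℝ)).mulVec (eψ k i))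
      ≤ -(1 / 2) * ‖eψ k i‖ ^ 2 + cc i * ‖toE (Qd i)‖ ^ 2 := by
    intro i
    have hsymW : (Wc i)ᵀ = Wc i := by
      have h := (hWc i).1.eq
      ext a b
      have := congrFun (congrFun h a) b
      simpa [Matrix.conjTranspose_apply] using this
    have hsym : (Wc i ⊗ₖ (1 : Matrix (Fin (n i)) (Fin (n i)) ℝ))ᵀ
        = Wc i ⊗ₖ (1 : Matrix (Fin (n i)) (Fin (n i)) ℝ) := by
      rw [kron_one_transpose, hsymW]
    have hA : (Ab i)ᵀ * Wc i * Ab i = Wc i - 1 := by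
      have h := hLyap i
      rw [sub_eq_iff_eq_add] at h
      rw [h, sub_eq_neg_add]
    have hval : eψ (k + 1) i ⬝ᵥ
        ((Wc i ⊗ₖ (1 : Matrix (Fin (n i)) (Fin (n i)) ℝ)).mulVec (eψ (k + 1) i))
        = (eψ k i ⬝ᵥ ((Wc i ⊗ₖ (1 : Matrix (Fin (n i)) (Fin (n i)) ℝ)).mulVec (eψ k i))
            - eψ k i ⬝ᵥ eψ k i)
          + 2 * (eψ k i ⬝ᵥ ((((Ab i)ᵀ * Wc i * Ib i)
              ⊗ₖ (1 : Matrix (Fin (n i)) (Fin (n i)) ℝ)).mulVec (Qd i)))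
          + Qd i ⬝ᵥ ((((Ib i)ᵀ * Wc i * Ib i)
              ⊗ₖ (1 : Matrix (Fin (n i)) (Fin (n i)) ℝ)).mulVec (Qd i)) := by
      rw [heψ k i, quad_expand _ _ _ hsym]
      simp only [kron_one_transpose, kron_one_mul]
      rw [hA, sub_kron, Matrix.one_kronecker_one, Matrix.sub_mulVec, dotProduct_sub,
        Matrix.one_mulVec]
    rw [hval]
    have hds : eψ k i ⬝ᵥ eψ k i = ‖eψ k i‖ ^ 2 := by
      rw [dot_self_eq, toE_eu]
    have hT2 := dot_le (eψ k i)
      ((((Ab i)ᵀ * Wc i * Ib i) ⊗ₖ (1 : Matrix (Fin (n i)) (Fin (n i)) ℝ)).mulVec (Qd i))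
    have hv2 := norm_kron_mulVec_sq_le ((Ab i)ᵀ * Wc i * Ib i) (Qd i)
    have hT4 := dot_le (Qd i)
      ((((Ib i)ᵀ * Wc i * Ib i) ⊗ₖ (1 : Matrix (Fin (n i)) (Fin (n i)) ℝ)).mulVec (Qd i))
    have hw := norm_kron_mulVec_le ((Ib i)ᵀ * Wc i * Ib i) (Qd i)
    rw [toE_eu (eψ k i)] at hT2
    rw [hds]
    simp only [hcc]
    nlinarith [sq_nonneg (‖eψ k i‖ - 2 * ‖toE ((((Ab i)ᵀ * Wc i * Ib i)
        ⊗ₖ (1 : Matrix (Fin (n i)) (Fin (n i)) ℝ)).mulVec (Qd i))‖),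
      norm_nonneg (toE (Qd i)), norm_nonneg (eψ k i),
      mul_le_mul_of_nonneg_left hw (norm_nonneg (toE (Qd i)))]
  -- gradient-difference bound per coalition
  have htv : ∀ a : Agent N n, toVec (ξ (k + 1)) a - toVec (ξ k) a = toVec D a := fun a => rfl
  have hq : ∀ i : Fin N, ‖toE (Qd i)‖ ^ 2 ≤ ∑ j, l i j ^ 2 * ‖toVec D ⟨i, j⟩‖ ^ 2 := by
    intro i
    rw [eu_norm_sq, Fintype.sum_prod_type]
    apply Finset.sum_le_sum
    intro j _
    set a : Agent N n := ⟨i, j⟩ with ha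
    set g : Vec N n := gradient (f i j) (toVec (ξ (k + 1)) a) with hg
    set h : Vec N n := gradient (f i j) (toVec (ξ k) a) with hh
    have hterm : ∀ m : Fin (n i), Qd i (j, m) = (g - h) i m := fun m => rfl
    calc ∑ m, (Qd i (j, m)) ^ 2 = ∑ m, ((g - h) i m) ^ 2 := by
          simp_rw [hterm]
      _ = ‖toE ((g - h) i)‖ ^ 2 := (eu_norm_sq _).symm
      _ = ‖(g - h) i‖ ^ 2 := by rw [toE_eu]
      _ ≤ ∑ i', ‖(g - h) i'‖ ^ 2 :=
          Finset.single_le_sum (fun i' _ => sq_nonneg ‖(g - h) i'‖) (Finset.mem_univ i)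
      _ = ‖g - h‖ ^ 2 := (PiLp.norm_sq_eq_of_L2 _ _).symm
      _ ≤ (l i j * ‖toVec (ξ (k + 1)) a - toVec (ξ k) a‖) ^ 2 :=
          pow_le_pow_left₀ (norm_nonneg _) (hlip i j _ _) 2
      _ = l i j ^ 2 * ‖toVec D a‖ ^ 2 := by rw [htv a, mul_pow]
  -- the maximum
  set F : ℝ := fmax (⟨⟨⟨0, hN⟩, ⟨0, hn ⟨0, hN⟩⟩⟩⟩ : Nonempty (Agent N n))
      (fun a : Agent N n => cc a.1 * l a.1 a.2 ^ 2) with hF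
  have hFle : ∀ a : Agent N n, cc a.1 * l a.1 a.2 ^ 2 ≤ F := by
    intro a
    rw [hF]
    unfold fmax; exact Finset.le_sup' (fun a : Agent N n => cc a.1 * l a.1 a.2 ^ 2)
      (Finset.mem_univ a)
  have hFnn : 0 ≤ F := by
    refine le_trans ?_ (hFle ⟨⟨0, hN⟩, ⟨0, hn ⟨0, hN⟩⟩⟩)
    exact mul_nonneg (hccnn _) (sq_nonneg _)
  -- sum of the gradient terms
  have hDsum : ∑ a : Agent N n, ‖toVec D a‖ ^ 2 = ‖D‖ ^ 2 := by
    have h1 : ∀ a : Agent N n, ‖toVec D a‖ ^ 2 = ∑ b : Agent N n, (D (a, b)) ^ 2 := by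
      intro a
      rw [PiLp.norm_sq_eq_of_L2]
      rw [← Finset.univ_sigma_univ, Finset.sum_sigma]
      apply Finset.sum_congr rfl
      intro p _
      rw [← toE_eu (toVec D a p), eu_norm_sq]
      rfl
    simp_rw [h1]
    rw [← toE_eu D, eu_norm_sq, Fintype.sum_prod_type]
    rfl
  have hsum2 : ∑ i, cc i * ‖toE (Qd i)‖ ^ 2 ≤ F * ‖D‖ ^ 2 := by
    calc ∑ i, cc i * ‖toE (Qd i)‖ ^ 2
        ≤ ∑ i, ∑ j, (cc i * l i j ^ 2) * ‖toVec D ⟨i, j⟩‖ ^ 2 := by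
          apply Finset.sum_le_sum
          intro i _
          calc cc i * ‖toE (Qd i)‖ ^ 2
              ≤ cc i * ∑ j, l i j ^ 2 * ‖toVec D ⟨i, j⟩‖ ^ 2 :=
                mul_le_mul_of_nonneg_left (hq i) (hccnn i)
            _ = ∑ j, (cc i * l i j ^ 2) * ‖toVec D ⟨i, j⟩‖ ^ 2 := by
                rw [Finset.mul_sum]; apply Finset.sum_congr rfl; intro j _; ring
      _ ≤ ∑ i, ∑ j, F * ‖toVec D ⟨i, j⟩‖ ^ 2 := by
          apply Finset.sum_le_sum; intro i _
          apply Finset.sum_le_sum; intro j _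
          exact mul_le_mul_of_nonneg_right (hFle ⟨i, j⟩) (sq_nonneg _)
      _ = F * ∑ a : Agent N n, ‖toVec D a‖ ^ 2 := by
          rw [← Finset.univ_sigma_univ, Finset.sum_sigma, Finset.mul_sum]
          apply Finset.sum_congr rfl; intro i _
          rw [Finset.mul_sum]
      _ = F * ‖D‖ ^ 2 := by rw [hDsum]
  -- bound on ‖D‖
  have hD2 : ‖D‖ ^ 2 ≤ specNorm ((1 : Matrix (Agent N n × Agent N n) (Agent N n × Agent N n) ℝ)
      - M) ^ 2 * ‖eξ k‖ ^ 2 := by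
    have h1 : ‖toE ((M - 1).mulVec (eξ k))‖ ^ 2 ≤ specNorm (M - 1) ^ 2 * ‖toE (eξ k)‖ ^ 2 :=
      norm_mulVec_sq_le _ _
    have h2 : specNorm (M - 1)
        = specNorm ((1 : Matrix (Agent N n × Agent N n) (Agent N n × Agent N n) ℝ) - M) := by
      rw [← specNorm_neg ((1 : Matrix (Agent N n × Agent N n) (Agent N n × Agent N n) ℝ) - M),
        neg_sub]
    have h3 : D = toE ((M - 1).mulVec (eξ k)) := congrArg (WithLp.toLp 2) (hξ k)
    rw [h3, toE_eu (eξ k)] at *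
    rw [← h2]
    exact h1
  -- norm of the stacked error
  have hpsi : ‖eψ k‖ ^ 2 = ∑ i, ‖eψ k i‖ ^ 2 := PiLp.norm_sq_eq_of_L2 _ _
  -- assemble
  rw [← Finset.sum_sub_distrib]
  calc ∑ i, (eψ (k + 1) i ⬝ᵥ
          ((Wc i ⊗ₖ (1 : Matrix (Fin (n i)) (Fin (n i)) ℝ)).mulVec (eψ (k + 1) i))
        - eψ k i ⬝ᵥ ((Wc i ⊗ₖ (1 : Matrix (Fin (n i)) (Fin (n i)) ℝ)).mulVec (eψ k i)))
      ≤ ∑ i, (-(1 / 2) * ‖eψ k i‖ ^ 2 + cc i * ‖toE (Qd i)‖ ^ 2) :=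
        Finset.sum_le_sum fun i _ => key i
    _ = -(1 / 2) * ‖eψ k‖ ^ 2 + ∑ i, cc i * ‖toE (Qd i)‖ ^ 2 := by
        rw [Finset.sum_add_distrib, ← Finset.mul_sum, hpsi]
    _ ≤ -(1 / 2) * ‖eψ k‖ ^ 2 + 2 * F
          * specNorm ((1 : Matrix (Agent N n × Agent N n) (Agent N n × Agent N n) ℝ) - M) ^ 2
          * ‖eξ k‖ ^ 2 := by
        have h4 := mul_le_mul_of_nonneg_left hD2 hFnn
        nlinarith [hsum2, h4, mul_nonneg (mul_nonneg hFnn (sq_nonneg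
          (specNorm ((1 : Matrix (Agent N n × Agent N n) (Agent N n × Agent N n) ℝ) - M))))
          (sq_nonneg ‖eξ k‖)]
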